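/- If a finite group G acting linearly on a finite-dimensional vector space V over a field F of characteristic p > 2 contains a nondiagonalizable reflection (an element h with fixed space of codimension 1 that is not diagonalizable), then the transfer map T : V → V, defined by T(v) = Σ_{a∈G} a·v, is identically zero. -/

import Mathlib

/-- A linear endomorphism is diagonalizable if there is a basis of eigenvectors. -/
def IsDiagonalizable {F V : Type*} [Field F] [AddCommGroup V] [Module F V]
    (f : V →ₗ[F] V) : Prop :=
  ∃ (ι : Type) (b : Module.Basis ι F V), ∀ i, ∃ c : F, f (b i) = c • b i

section aux

variable {F V : Type*} [Field F] [AddCommGroup V] [Module F V]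

/-- Powers of a unipotent endomorphism with square-zero nilpotent part. -/
lemma pow_one_sub_of_sq_zero (n : V →ₗ[F] V) (hn : n * n = 0) (k : ℕ) :
    (1 - n) ^ k = 1 - k • n := by
  induction k with
  | zero => simp
  | succ k ih =>
    rw [pow_succ, ih]
    have hmul : (1 - k • n) * (1 - n) = 1 - n - k • n + k • (n * n) := by
      simp only [mul_sub, sub_mul, smul_mul_assoc, one_mul, mul_one]
      abel
    rw [hmul, hn, smul_zero, succ_nsmul]
    abel

/-- An explicit bijection `(G ⧸ K) × K ≃ G`. -/
noncomputable def cosetProdEquiv {G : Type*} [Group G] (K : Subgroup G) :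
    (G ⧸ K) × K ≃ G where
  toFun x := Quotient.out x.1 * (x.2 : G)
  invFun a := (QuotientGroup.mk a,
    ⟨(Quotient.out (QuotientGroup.mk a : G ⧸ K))⁻¹ * a, by
      rw [← QuotientGroup.eq]
      exact Quotient.out_eq' _⟩)
  left_inv := by
    rintro ⟨q, k, hk⟩
    have hmk : (QuotientGroup.mk (Quotient.out q * k) : G ⧸ K) = q := by
      rw [QuotientGroup.mk_mul_of_mem _ hk]
      exact Quotient.out_eq' q
    refine Prod.ext hmk (Subtype.ext ?_)
    simp only [hmk]
    group
  right_inv a := by simp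

end aux

/-- If a finite group `G ⊆ GL(V)` over a field of characteristic `p > 2` contains a
nondiagonalizable reflection, then the transfer map `T(v) = ∑_{a ∈ G} a • v` is zero. -/
theorem stmt0 {F V : Type*} [Field F] [AddCommGroup V] [Module F V]
    [FiniteDimensional F V] (p : ℕ) [Fact p.Prime] [CharP F p] (hp : 2 < p)
    (G : Subgroup (V ≃ₗ[F] V)) [Fintype G]
    (h : V ≃ₗ[F] V) (hhG : h ∈ G)
    (hrefl : Module.finrank F (V ⧸ LinearMap.ker (1 - (h : V →ₗ[F] V))) = 1)
    (hnd : ¬ IsDiagonalizable (h : V →ₗ[F] V)) :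
    ∀ v : V, ∑ a : G, (a : V ≃ₗ[F] V) v = 0 := by
  classical
  set e : V →ₗ[F] V := (h : V →ₗ[F] V) with he
  set n : V →ₗ[F] V := 1 - e with hn
  -- the range of `n` is one-dimensional
  have hrange1 : Module.finrank F (LinearMap.range n) = 1 := by
    rw [← LinearEquiv.finrank_eq (LinearMap.quotKerEquivRange n)]
    exact hrefl
  obtain ⟨w₀, hw₀ne, hw₀span⟩ := (finrank_eq_one_iff' (K := F)).mp hrange1
  set w : V := (w₀ : V) with hw
  have hwne : w ≠ 0 := fun hc => hw₀ne (Subtype.ext hc)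
  have hwspan : ∀ x ∈ LinearMap.range n, ∃ c : F, c • w = x := by
    intro x hx
    obtain ⟨c, hc⟩ := hw₀span ⟨x, hx⟩
    exact ⟨c, congrArg Subtype.val hc⟩
  obtain ⟨c, hc⟩ := hwspan (n w) (LinearMap.mem_range_self n w)
  have hex : ∀ x : V, e x = x - n x := by
    intro x
    rw [hn]
    simp only [LinearMap.sub_apply, Module.End.one_apply]
    abel
  -- the eigenvalue on the range must be zero, else `h` is diagonalizable
  have hc0 : c = 0 := by
    by_contra hcne
    apply hnd
    set K' := LinearMap.ker n with hK'
    set W := LinearMap.range n with hW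
    have hdisj : Disjoint K' W := by
      rw [Submodule.disjoint_def]
      intro x hxK hxW
      obtain ⟨a, ha⟩ := hwspan x hxW
      have hnx : n x = 0 := hxK
      rw [← ha, map_smul, ← hc, smul_smul] at hnx
      rcases smul_eq_zero.mp hnx with h1 | h2
      · rcases mul_eq_zero.mp h1 with h3 | h4
        · rw [← ha, h3, zero_smul]
        · exact absurd h4 hcne
      · exact absurd h2 hwne
    have htop : K' ⊔ W = ⊤ := by
      apply Submodule.eq_top_of_finrank_eq
      have h1 := Submodule.finrank_sup_add_finrank_inf_eq K' W
      rw [disjoint_iff.mp hdisj, finrank_bot, add_zero] at h1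
      rw [h1, add_comm]
      exact LinearMap.finrank_range_add_finrank_ker n
    have hcompl : IsCompl K' W := ⟨hdisj, codisjoint_iff.mpr htop⟩
    set bK := Module.finBasis F K'
    obtain ⟨bW⟩ := (finrank_eq_one_iff (K := F) (V := W) (Fin 1)).mp hrange1
    refine ⟨_, (bK.prod bW).map (Submodule.prodEquivOfIsCompl K' W hcompl), ?_⟩
    rintro (j | j)
    · refine ⟨1, ?_⟩
      have hb : ((bK.prod bW).map (Submodule.prodEquivOfIsCompl K' W hcompl)) (Sum.inl j)
          = (bK j : V) := by
        rw [Module.Basis.map_apply, Submodule.coe_prodEquivOfIsCompl',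
          Module.Basis.prod_apply_inl_fst, Module.Basis.prod_apply_inl_snd]
        simp
      have hker : n (bK j : V) = 0 := (bK j).2
      rw [hb, one_smul, hex, hker, sub_zero]
    · obtain ⟨a, ha⟩ := hwspan (bW j : V) (bW j).2
      refine ⟨1 - c, ?_⟩
      have hb : ((bK.prod bW).map (Submodule.prodEquivOfIsCompl K' W hcompl)) (Sum.inr j)
          = (bW j : V) := by
        rw [Module.Basis.map_apply, Submodule.coe_prodEquivOfIsCompl',
          Module.Basis.prod_apply_inr_fst, Module.Basis.prod_apply_inr_snd]
        simp
      have hnb : n (bW j : V) = c • (bW j : V) := by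
        rw [← ha, map_smul, ← hc, smul_smul, smul_smul, mul_comm]
      rw [hb, hex, hnb, sub_smul, one_smul]
  -- so `n` squares to zero
  rw [hc0, zero_smul] at hc
  have hn2 : n * n = 0 := by
    ext v
    obtain ⟨a, ha⟩ := hwspan (n v) (LinearMap.mem_range_self n v)
    simp only [Module.End.mul_apply, LinearMap.zero_apply]
    rw [← ha, map_smul, ← hc, smul_zero]
  -- `n ≠ 0`, hence `h ≠ 1`
  have hnne : n ≠ 0 := by
    intro h0
    rw [h0, LinearMap.range_zero] at hrange1
    simp [finrank_bot] at hrange1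
  have hepow : ∀ k : ℕ, e ^ k = 1 - k • n := by
    intro k
    have : e = 1 - n := by rw [hn]; abel
    rw [this]
    exact pow_one_sub_of_sq_zero n hn2 k
  have hpsmul : ∀ x : V →ₗ[F] V, ∀ k : ℕ, p ∣ k → k • x = 0 := by
    intro x k hk
    rw [← Nat.cast_smul_eq_nsmul F, (CharP.cast_eq_zero_iff F p k).mpr hk, zero_smul]
  -- the geometric sum of `e` vanishes
  have hN : (∑ i ∈ Finset.range p, e ^ i) = 0 := by
    have : (∑ i ∈ Finset.range p, e ^ i)
        = (p • (1 : V →ₗ[F] V)) - (∑ i ∈ Finset.range p, i) • n := by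
      simp only [hepow]
      rw [Finset.sum_sub_distrib, Finset.sum_const, Finset.card_range, ← Finset.sum_smul]
    rw [this, hpsmul _ p dvd_rfl, hpsmul _ _ ?_, sub_zero]
    have h2 : p ∣ (∑ i ∈ Finset.range p, i) * 2 := by
      rw [Finset.sum_range_id_mul_two]
      exact dvd_mul_right p (p - 1)
    have hcop : Nat.Coprime p 2 := by
      exact (Nat.coprime_primes (Fact.out) Nat.prime_two).mpr (by omega)
    exact (Nat.Coprime.dvd_of_dvd_mul_right hcop) h2
  -- `h` has order `p` in `G`
  set h' : G := ⟨h, hhG⟩ with hh'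
  have hpow_apply : ∀ (k : ℕ) (v : V), (h ^ k) v = (e ^ k) v := by
    intro k v
    rw [LinearEquiv.pow_apply, Module.End.pow_apply]
    rfl
  have hhp : h' ^ p = 1 := by
    ext v
    show (((h' ^ p : G) : V ≃ₗ[F] V)) v = v
    rw [SubgroupClass.coe_pow]
    rw [hpow_apply p v, hepow p, hpsmul _ p dvd_rfl]
    simp
  have hne1 : h' ≠ 1 := by
    intro h1
    apply hnne
    have : h = 1 := congrArg Subtype.val h1
    rw [hn, he, this]
    ext v; simp
  have hord : orderOf h' = p := orderOf_eq_prime hhp hne1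
  set K : Subgroup G := Subgroup.zpowers h' with hK
  haveI : Fintype K := Fintype.ofFinite K
  -- the sum over the cyclic group generated by `h` kills every vector
  have hE2 : ∃ E2 : Fin p ≃ K, ∀ i : Fin p, ((E2 i : G) : V ≃ₗ[F] V) = h ^ (i : ℕ) := by
    have hinj : Function.Injective (fun i : Fin p => (⟨h' ^ (i : ℕ),
        Subgroup.zpow_mem _ (Subgroup.mem_zpowers h') (i : ℕ)⟩ : K)) := by
      intro i j hij
      have h1 : h' ^ (i : ℕ) = h' ^ (j : ℕ) := congrArg Subtype.val hij
      have h2 : (i : ℕ) ≡ (j : ℕ) [MOD orderOf h'] := by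
        rwa [← pow_eq_pow_iff_modEq]
      rw [hord] at h2
      have := (Nat.ModEq.eq_of_lt_of_lt h2 i.isLt j.isLt)
      exact Fin.ext this
    have hcard : Fintype.card K = Fintype.card (Fin p) := by
      rw [Fintype.card_fin, ← hord, ← Nat.card_eq_fintype_card, Nat.card_zpowers]
    have hbij : Function.Bijective (fun i : Fin p => (⟨h' ^ (i : ℕ),
        Subgroup.zpow_mem _ (Subgroup.mem_zpowers h') (i : ℕ)⟩ : K)) :=
      (Fintype.bijective_iff_injective_and_card _).mpr ⟨hinj, hcard.symm⟩
    refine ⟨Equiv.ofBijective _ hbij, fun i => ?_⟩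
    show (((h' ^ (i : ℕ) : G) : V ≃ₗ[F] V)) = h ^ (i : ℕ)
    rw [SubgroupClass.coe_pow]
  obtain ⟨E2, hE2⟩ := hE2
  have hKsum : ∀ v : V, ∑ k : K, ((k : G) : V ≃ₗ[F] V) v = 0 := by
    intro v
    rw [← Fintype.sum_bijective E2 E2.bijective
      (fun i => ((E2 i : G) : V ≃ₗ[F] V) v)
      (fun k => ((k : G) : V ≃ₗ[F] V) v) (fun i => rfl)]
    have hterm : ∀ i : Fin p,
        ((E2 i : G) : V ≃ₗ[F] V) v = (e ^ (i : ℕ)) v := by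
      intro i
      rw [hE2]
      exact hpow_apply _ v
    rw [Fintype.sum_congr _ _ hterm, Fin.sum_univ_eq_sum_range (fun i => (e ^ i) v),
      ← LinearMap.sum_apply]
    rw [hN]
    simp
  -- decompose the sum over `G` into cosets of `K`
  intro v
  have := Fintype.sum_bijective (cosetProdEquiv K) (cosetProdEquiv K).bijective
    (fun x => ((cosetProdEquiv K x : G) : V ≃ₗ[F] V) v)
    (fun a => ((a : G) : V ≃ₗ[F] V) v) (fun x => rfl)
  rw [← this, Fintype.sum_prod_type]
  apply Finset.sum_eq_zero
  intro q _
  have : ∀ k : K, ((cosetProdEquiv K (q, k) : G) : V ≃ₗ[F] V) v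
      = ((Quotient.out q : G) : V ≃ₗ[F] V) (((k : G) : V ≃ₗ[F] V) v) := by
    intro k
    show (((Quotient.out q * (k : G) : G) : V ≃ₗ[F] V)) v = _
    rw [Subgroup.coe_mul]
    rfl
  rw [Fintype.sum_congr _ _ this, ← map_sum, hKsum v, map_zero]
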